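/- Let U = [[A, B], [C, D]] be a block unitary on ℂ^m ⊕ ℂ^n with transfer function Ψ(z) = A + zB(I − zD)^{-1}C, and let Ψ'(w) = D* + wB*(I − wA*)^{-1}C*. Then for z, w in the open unit disk with (I − zD) and (I − wA*) invertible, det(Ψ(z) − wI) = 0 if and only if det(Ψ'(w) − zI) = 0. -/

import Mathlib

open Matrix

theorem transfer_functions_isospectral (m n : ℕ)
    (A : Matrix (Fin m) (Fin m) ℂ) (B : Matrix (Fin m) (Fin n) ℂ)
    (C : Matrix (Fin n) (Fin m) ℂ) (D : Matrix (Fin n) (Fin n) ℂ)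
    (hU : Matrix.fromBlocks A B C D ∈ Matrix.unitaryGroup (Fin m ⊕ Fin n) ℂ)
    (z w : ℂ) (hz : ‖z‖ < 1) (hw : ‖w‖ < 1)
    (hinvz : IsUnit ((1 : Matrix (Fin n) (Fin n) ℂ) - z • D))
    (hinvw : IsUnit ((1 : Matrix (Fin m) (Fin m) ℂ) - w • Aᴴ)) :
    ((A + z • (B * (1 - z • D)⁻¹ * C)) - w • 1).det = 0 ↔
    ((Dᴴ + w • (Bᴴ * (1 - w • Aᴴ)⁻¹ * Cᴴ)) - z • 1).det = 0 := by
  set U : Matrix (Fin m ⊕ Fin n) (Fin m ⊕ Fin n) ℂ := Matrix.fromBlocks A B C D with hUdef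
  haveI : Invertible ((1 : Matrix (Fin n) (Fin n) ℂ) - z • D) := hinvz.invertible
  haveI : Invertible ((1 : Matrix (Fin m) (Fin m) ℂ) - w • Aᴴ) := hinvw.invertible
  haveI : Invertible (-(((1 : Matrix (Fin n) (Fin n) ℂ) - z • D))) := invertibleNeg _
  haveI : Invertible (-(((1 : Matrix (Fin m) (Fin m) ℂ) - w • Aᴴ))) := invertibleNeg _
  have hzD : (z • D - 1 : Matrix (Fin n) (Fin n) ℂ) = -(1 - z • D) := (neg_sub _ _).symm
  have hwA : (w • Aᴴ - 1 : Matrix (Fin m) (Fin m) ℂ) = -(1 - w • Aᴴ) := (neg_sub _ _).symm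
  -- K and L
  set K : Matrix (Fin m ⊕ Fin n) (Fin m ⊕ Fin n) ℂ :=
    Matrix.fromBlocks (A - w • 1) (z • B) C (-(1 - z • D)) with hK
  set L : Matrix (Fin m ⊕ Fin n) (Fin m ⊕ Fin n) ℂ :=
    Matrix.fromBlocks (-(1 - w • Aᴴ)) Cᴴ (w • Bᴴ) (Dᴴ - z • 1) with hL
  -- step 1: det K in terms of goal LHS
  have detK : K.det = (-(1 - z • D)).det * ((A + z • (B * (1 - z • D)⁻¹ * C)) - w • 1).det := by
    rw [hK, det_fromBlocks₂₂]
    congr 1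
    rw [invOf_neg, invOf_eq_nonsing_inv]
    congr 1
    simp only [Matrix.mul_neg, Matrix.neg_mul, sub_neg_eq_add]
    rw [Matrix.smul_mul, Matrix.smul_mul, Matrix.mul_assoc]
    abel
  have detL : L.det = (-(1 - w • Aᴴ)).det * ((Dᴴ + w • (Bᴴ * (1 - w • Aᴴ)⁻¹ * Cᴴ)) - z • 1).det := by
    rw [hL, det_fromBlocks₁₁]
    congr 1
    rw [invOf_neg, invOf_eq_nonsing_inv]
    congr 1
    simp only [Matrix.mul_neg, Matrix.neg_mul, sub_neg_eq_add]
    rw [Matrix.smul_mul, Matrix.smul_mul, Matrix.mul_assoc]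
    abel
  -- step 2: Uᴴ * K = -L
  have hUU : Uᴴ * U = 1 := by
    rw [← Matrix.star_eq_conjTranspose]
    exact (Matrix.mem_unitaryGroup_iff').mp hU
  have hKU : K = U * Matrix.fromBlocks 1 0 0 (z • 1) - Matrix.fromBlocks (w • 1) 0 0 1 := by
    rw [hUdef, hK]
    simp only [Matrix.fromBlocks_multiply, sub_eq_add_neg, Matrix.fromBlocks_neg,
      Matrix.fromBlocks_add]
    refine Matrix.fromBlocks_inj.mpr ⟨?_, ?_, ?_, ?_⟩ <;>
      simp [Matrix.mul_smul] <;> abel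
  have hLU : Uᴴ * K = -L := by
    rw [hKU, Matrix.mul_sub, ← Matrix.mul_assoc, hUU, Matrix.one_mul]
    rw [hUdef, hL, Matrix.fromBlocks_conjTranspose]
    simp only [Matrix.fromBlocks_multiply, sub_eq_add_neg, Matrix.fromBlocks_neg,
      Matrix.fromBlocks_add]
    refine Matrix.fromBlocks_inj.mpr ⟨?_, ?_, ?_, ?_⟩ <;>
      simp [Matrix.mul_smul] <;> abel
  -- step 3
  have hdetU : IsUnit Uᴴ.det := by
    have := congrArg Matrix.det hUU
    rw [Matrix.det_mul, Matrix.det_one] at this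
    exact IsUnit.of_mul_eq_one _ this
  have hdz : (-(1 - z • D) : Matrix (Fin n) (Fin n) ℂ).det ≠ 0 := by
    have := hinvz.map (MonoidHom.id _)
    simp only [Matrix.det_neg]
    refine mul_ne_zero (pow_ne_zero _ (by norm_num)) ?_
    exact (Matrix.isUnit_iff_isUnit_det _ |>.mp hinvz).ne_zero
  have hdw : (-(1 - w • Aᴴ) : Matrix (Fin m) (Fin m) ℂ).det ≠ 0 := by
    simp only [Matrix.det_neg]
    refine mul_ne_zero (pow_ne_zero _ (by norm_num)) ?_
    exact (Matrix.isUnit_iff_isUnit_det _ |>.mp hinvw).ne_zero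
  have key : K.det = 0 ↔ L.det = 0 := by
    have h1 : Uᴴ.det * K.det = (-L).det := by rw [← Matrix.det_mul, hLU]
    rw [Matrix.det_neg] at h1
    constructor
    · intro h
      have := h1.symm
      rw [h, mul_zero] at this
      rcases mul_eq_zero.mp this with h' | h'
      · exact absurd h' (pow_ne_zero _ (by norm_num))
      · exact h'
    · intro h
      rw [h, mul_zero] at h1
      rcases mul_eq_zero.mp h1 with h' | h'
      · exact absurd h' hdetU.ne_zero
      · exact h'
  rw [detK, detL] at key
  constructor
  · intro h
    have := key.mp (by rw [h, mul_zero])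
    rcases mul_eq_zero.mp this with h' | h'
    · exact absurd h' hdw
    · exact h'
  · intro h
    have := key.mpr (by rw [h, mul_zero])
    rcases mul_eq_zero.mp this with h' | h'
    · exact absurd h' hdz
    · exact h'
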